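/- Let n ≥ 1, let 0 < ε ≤ 1/2, and let x_1, …, x_n ∈ (0, 1] be pairwise distinct. For each i ∈ {1, …, n} define p_i = (i, i) and p_i′ = (i + ε·x_i/√2, i + ε·x_i/√2) in ℝ². Then for every nonempty subset T ⊆ {1, …, n}, the closest pair of the point set ⋃_{i ∈ T} {p_i, p_i′} is {p_m, p_m′}, where m is the index in T minimising x_m; that is, ‖p_m − p_m′‖ = ε·x_m is strictly smaller than the distance between any other two distinct points of ⋃_{i ∈ T} {p_i, p_i′}. Consequently, repeatedly removing the (unique) closest pair from the point set {p_1, p_1′, …, p_n, p_n′} outputs the pairs in increasing order of x_i, i.e., sorts x_1, …, x_n. -/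

import Mathlib

noncomputable section

/-- The point `p_i = (i, i)` (1-based index `i = (i : Fin n) + 1`). -/
def ptA (n : ℕ) (i : Fin n) : EuclideanSpace ℝ (Fin 2) :=
  WithLp.toLp 2 fun _ => ((i : ℕ) : ℝ) + 1

/-- The point `p_i' = (i + ε·x_i/√2, i + ε·x_i/√2)`. -/
def ptB (n : ℕ) (ε : ℝ) (x : Fin n → ℝ) (i : Fin n) : EuclideanSpace ℝ (Fin 2) :=
  WithLp.toLp 2 fun _ => ((i : ℕ) : ℝ) + 1 + ε * x i / Real.sqrt 2

/-- The point set `⋃_{i ∈ T} {p_i, p_i'}`. -/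
def ptSet (n : ℕ) (ε : ℝ) (x : Fin n → ℝ) (T : Finset (Fin n)) :
    Set (EuclideanSpace ℝ (Fin 2)) :=
  {w | ∃ i ∈ T, w = ptA n i ∨ w = ptB n ε x i}

lemma dist_const_pts (a b : ℝ) (u v : EuclideanSpace ℝ (Fin 2))
    (hu : ∀ t, u t = a) (hv : ∀ t, v t = b) :
    dist u v = Real.sqrt 2 * |a - b| := by
  rw [EuclideanSpace.dist_eq]
  have h : ∑ i : Fin 2, dist (u i) (v i) ^ 2 = 2 * |a - b| ^ 2 := by
    rw [Fin.sum_univ_two, hu 0, hu 1, hv 0, hv 1, Real.dist_eq]; ring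
  rw [h, Real.sqrt_mul (by norm_num), Real.sqrt_sq (abs_nonneg _)]

lemma dist_lower (a b : ℝ) (u v : EuclideanSpace ℝ (Fin 2))
    (hu : ∀ t, u t = a) (hv : ∀ t, v t = b) :
    Real.sqrt 2 * (b - a) ≤ dist u v := by
  rw [dist_const_pts a b u v hu hv]
  exact mul_le_mul_of_nonneg_left (by rw [abs_sub_comm]; exact le_abs_self _)
    (Real.sqrt_nonneg 2)

lemma dist_AB (n : ℕ) (ε : ℝ) (x : Fin n → ℝ) (i : Fin n) (h : 0 ≤ ε * x i) :
    dist (ptA n i) (ptB n ε x i) = ε * x i := by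
  have hs0 : (0:ℝ) < Real.sqrt 2 := Real.sqrt_pos.mpr (by norm_num)
  rw [dist_const_pts (((i : ℕ) : ℝ) + 1) (((i : ℕ) : ℝ) + 1 + ε * x i / Real.sqrt 2)
    (ptA n i) (ptB n ε x i) (fun _ => rfl) (fun _ => rfl)]
  have h1 : |(((i : ℕ) : ℝ) + 1) - (((i : ℕ) : ℝ) + 1 + ε * x i / Real.sqrt 2)|
      = ε * x i / Real.sqrt 2 := by
    rw [abs_sub_comm]
    rw [show (((i : ℕ) : ℝ) + 1 + ε * x i / Real.sqrt 2) - (((i : ℕ) : ℝ) + 1)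
        = ε * x i / Real.sqrt 2 by ring]
    exact abs_of_nonneg (div_nonneg h hs0.le)
  rw [h1, mul_div_cancel₀ _ (ne_of_gt hs0)]

/-- cross-index bound, directed version -/
lemma cross_dir (n : ℕ) (ε : ℝ) (hε0 : 0 < ε) (hε : ε ≤ 1 / 2)
    (x : Fin n → ℝ) (hx : ∀ i, x i ∈ Set.Ioc (0 : ℝ) 1)
    (i j : Fin n) (hij : (i : ℕ) < (j : ℕ))
    (u v : EuclideanSpace ℝ (Fin 2))
    (hu : u = ptA n i ∨ u = ptB n ε x i)
    (hv : v = ptA n j ∨ v = ptB n ε x j) :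
    (1 : ℝ) / 2 < dist u v := by
  have hs0 : (0:ℝ) < Real.sqrt 2 := Real.sqrt_pos.mpr (by norm_num)
  have hs2 : Real.sqrt 2 ^ 2 = 2 := Real.sq_sqrt (by norm_num)
  have hji : ((i : ℕ) : ℝ) + 1 ≤ ((j : ℕ) : ℝ) := by exact_mod_cast hij
  have hxi := hx i
  have hxj := hx j
  have hδi : Real.sqrt 2 * (ε * x i / Real.sqrt 2) = ε * x i :=
    mul_div_cancel₀ _ (ne_of_gt hs0)
  have hεxi : ε * x i ≤ 1 / 2 := by nlinarith [hxi.1, hxi.2]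
  have hεxj : 0 ≤ ε * x j / Real.sqrt 2 :=
    div_nonneg (by nlinarith [hxj.1]) hs0.le
  rcases hu with rfl | rfl <;> rcases hv with rfl | rfl
  · refine lt_of_lt_of_le ?_ (dist_lower (((i : ℕ) : ℝ) + 1) (((j : ℕ) : ℝ) + 1)
      _ _ (fun _ => rfl) (fun _ => rfl))
    nlinarith [hδi, hεxj, hxi.1]
  · refine lt_of_lt_of_le ?_ (dist_lower (((i : ℕ) : ℝ) + 1)
      (((j : ℕ) : ℝ) + 1 + ε * x j / Real.sqrt 2) _ _ (fun _ => rfl) (fun _ => rfl))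
    nlinarith [hδi, hεxj, hxi.1]
  · refine lt_of_lt_of_le ?_ (dist_lower (((i : ℕ) : ℝ) + 1 + ε * x i / Real.sqrt 2)
      (((j : ℕ) : ℝ) + 1) _ _ (fun _ => rfl) (fun _ => rfl))
    nlinarith [hδi, hεxj, hxi.1]
  · refine lt_of_lt_of_le ?_ (dist_lower (((i : ℕ) : ℝ) + 1 + ε * x i / Real.sqrt 2)
      (((j : ℕ) : ℝ) + 1 + ε * x j / Real.sqrt 2) _ _ (fun _ => rfl) (fun _ => rfl))
    nlinarith [hδi, hεxj, hxi.1]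

lemma cross (n : ℕ) (ε : ℝ) (hε0 : 0 < ε) (hε : ε ≤ 1 / 2)
    (x : Fin n → ℝ) (hx : ∀ i, x i ∈ Set.Ioc (0 : ℝ) 1)
    (i j : Fin n) (hij : i ≠ j)
    (u v : EuclideanSpace ℝ (Fin 2))
    (hu : u = ptA n i ∨ u = ptB n ε x i)
    (hv : v = ptA n j ∨ v = ptB n ε x j) :
    (1 : ℝ) / 2 < dist u v := by
  rcases lt_or_gt_of_ne (fun h => hij (Fin.ext h) : (i : ℕ) ≠ (j : ℕ)) with h | h
  · exact cross_dir n ε hε0 hε x hx i j h u v hu hv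
  · rw [dist_comm]; exact cross_dir n ε hε0 hε x hx j i h v u hv hu

lemma key (n : ℕ) (ε : ℝ) (hε0 : 0 < ε) (hε : ε ≤ 1 / 2)
    (x : Fin n → ℝ) (hx : ∀ i, x i ∈ Set.Ioc (0 : ℝ) 1)
    (hinj : Function.Injective x)
    (T : Finset (Fin n)) (m : Fin n) (hm : m ∈ T) (hmin : ∀ i ∈ T, x m ≤ x i) :
    dist (ptA n m) (ptB n ε x m) = ε * x m ∧
      ∀ u ∈ ptSet n ε x T, ∀ v ∈ ptSet n ε x T, u ≠ v →
        ({u, v} : Set (EuclideanSpace ℝ (Fin 2))) ≠ {ptA n m, ptB n ε x m} →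
        ε * x m < dist u v := by
  have hxm := hx m
  have hεxm : ε * x m ≤ 1 / 2 := by nlinarith [hxm.1, hxm.2]
  refine ⟨dist_AB n ε x m (by nlinarith [hxm.1]), ?_⟩
  rintro u ⟨i, hiT, hui⟩ v ⟨j, hjT, hvj⟩ huv hpair
  by_cases hij : i = j
  · subst hij
    rcases hui with rfl | rfl <;> rcases hvj with rfl | rfl
    · exact absurd rfl huv
    · -- {ptA i, ptB i}
      by_cases him : i = m
      · subst him; exact absurd rfl hpair
      · rw [dist_AB n ε x i (by nlinarith [(hx i).1])]
        have : x m ≤ x i := hmin i hiT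
        have hne : x m ≠ x i := fun h => him (hinj h).symm
        have : x m < x i := lt_of_le_of_ne this hne
        nlinarith
    · by_cases him : i = m
      · subst him; exact absurd (Set.pair_comm _ _) hpair
      · rw [dist_comm, dist_AB n ε x i (by nlinarith [(hx i).1])]
        have : x m ≤ x i := hmin i hiT
        have hne : x m ≠ x i := fun h => him (hinj h).symm
        have : x m < x i := lt_of_le_of_ne this hne
        nlinarith
    · exact absurd rfl huv
  · exact lt_of_le_of_lt hεxm (cross n ε hε0 hε x hx i j hij u v hui hvj)

theorem decremental_closest_pair_sorts
    (n : ℕ) (hn : 1 ≤ n) (ε : ℝ) (hε0 : 0 < ε) (hε : ε ≤ 1 / 2)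
    (x : Fin n → ℝ) (hx : ∀ i, x i ∈ Set.Ioc (0 : ℝ) 1)
    (hinj : Function.Injective x) :
    -- for every nonempty subset T, the closest pair of ⋃_{i ∈ T} {p_i, p_i'} is
    -- {p_m, p_m'} where m ∈ T minimises x
    (∀ T : Finset (Fin n), T.Nonempty → ∀ m ∈ T, (∀ i ∈ T, x m ≤ x i) →
      dist (ptA n m) (ptB n ε x m) = ε * x m ∧
      ∀ u ∈ ptSet n ε x T, ∀ v ∈ ptSet n ε x T, u ≠ v →
        ({u, v} : Set (EuclideanSpace ℝ (Fin 2))) ≠ {ptA n m, ptB n ε x m} →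
        ε * x m < dist u v) ∧
    -- consequently, repeatedly removing the (unique) closest pair outputs the pairs in
    -- increasing order of x_i, i.e. sorts x_1, …, x_n
    (∃ σ : Equiv.Perm (Fin n), StrictMono (fun k => x (σ k)) ∧
      ∀ k : Fin n,
        ∀ u ∈ ptSet n ε x (Finset.univ.filter fun j => ∃ l : Fin n, k ≤ l ∧ j = σ l),
        ∀ v ∈ ptSet n ε x (Finset.univ.filter fun j => ∃ l : Fin n, k ≤ l ∧ j = σ l),
          u ≠ v → dist (ptA n (σ k)) (ptB n ε x (σ k)) ≤ dist u v) := by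
  constructor
  · intro T _ m hm hmin
    exact key n ε hε0 hε x hx hinj T m hm hmin
  · refine ⟨Tuple.sort x, ?_, ?_⟩
    · have hmono : Monotone (x ∘ (Tuple.sort x)) := Tuple.monotone_sort x
      exact hmono.strictMono_of_injective (hinj.comp (Tuple.sort x).injective)
    · intro k u hu v hv huv
      set σ := Tuple.sort x
      set T : Finset (Fin n) := Finset.univ.filter fun j => ∃ l : Fin n, k ≤ l ∧ j = σ l
      have hm : σ k ∈ T := Finset.mem_filter.mpr ⟨Finset.mem_univ _, ⟨k, le_refl k, rfl⟩⟩
      have hmin : ∀ i ∈ T, x (σ k) ≤ x i := by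
        intro i hi
        obtain ⟨-, l, hkl, rfl⟩ := Finset.mem_filter.mp hi
        exact Tuple.monotone_sort x hkl
      obtain ⟨heq, hlt⟩ := key n ε hε0 hε x hx hinj T (σ k) hm hmin
      by_cases hp : ({u, v} : Set (EuclideanSpace ℝ (Fin 2)))
          = {ptA n (σ k), ptB n ε x (σ k)}
      · rcases Set.pair_eq_pair_iff.mp hp with ⟨rfl, rfl⟩ | ⟨rfl, rfl⟩
        · exact le_refl _
        · rw [dist_comm]
      · exact le_of_lt (heq ▸ hlt u hu v hv huv hp)
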